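/- arXiv:2211.16167 — 2 statements merged into one kernel-verified Lean document; each statement's English description precedes it below -/
import Mathlib

section
/- With the same interval construction: for any $i < k$ in $\S$ and any $m < i$, it holds that $\bigcup_{r \le m}\Gamma_{ir}(x) \supset \bigcup_{r \le m}\bar\Gamma_{kr}$ for all $x \in \mathbb{R}^d$. -/
open Set

/-- The interval `Γ_{ij}(x)` from the Skorokhod-representation construction:
for `j < i` consecutive intervals on `[0,∞)` starting at `0` ordered by
increasing `j`; for `j > i` consecutive intervals on `(-∞,0)` ending at `0`,
with `Γ_{i,i+c_i}` adjacent to `0`. -/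
private lemma chain_le (S : ℕ → ℝ) : ∀ (m : ℕ), (∀ r ≤ m, S r ≤ S (r+1)) → S 0 ≤ S (m+1) := by
  intro m
  induction m with
  | zero => intro h; exact h 0 le_rfl
  | succ n ih =>
    intro h
    exact (ih fun r hr => h r (hr.trans (Nat.le_succ n))).trans (h (n+1) le_rfl)

private lemma biUnion_Ico_eq (S : ℕ → ℝ) : ∀ (m : ℕ), (∀ r ≤ m, S r ≤ S (r+1)) →
    ⋃ r ∈ {r : ℕ | r ≤ m}, Ico (S r) (S (r+1)) = Ico (S 0) (S (m+1)) := by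
  intro m
  induction m with
  | zero => intro _; simp [Nat.le_zero]
  | succ n ih =>
    intro h
    have hset : {r : ℕ | r ≤ n+1} = insert (n+1) {r : ℕ | r ≤ n} := by
      ext r; simp; omega
    have h' : ∀ r ≤ n, S r ≤ S (r+1) := fun r hr => h r (hr.trans (Nat.le_succ n))
    rw [hset, Set.biUnion_insert, ih h', Set.union_comm,
      Set.Ico_union_Ico_eq_Ico (chain_le S n h') (h (n+1) le_rfl)]

noncomputable def Gam (d : ℕ) (q : ℕ → ℕ → (Fin d → ℝ) → ℝ) (c : ℕ → ℕ)
    (i j : ℕ) (x : Fin d → ℝ) : Set ℝ :=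
  if j < i then
    Set.Ico (∑ l ∈ Finset.Ico 1 j, q i l x) (∑ l ∈ Finset.Ico 1 (j + 1), q i l x)
  else if i < j then
    Set.Ico (-(∑ l ∈ Finset.Icc j (i + c i), q i l x))
      (-(∑ l ∈ Finset.Icc (j + 1) (i + c i), q i l x))
  else ∅

/-- for `i < k` and `m < i`, `⋃_{r ≤ m} Γ_{ir}(x) ⊇ ⋃_{r ≤ m} Γ̄_{kr}`. -/
theorem stmt_2 (d N : ℕ) (q : ℕ → ℕ → (Fin d → ℝ) → ℝ) (c cbar : ℕ → ℕ) (K₀ : ℝ)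
    (qbar : ℕ → ℕ → ℝ)
    (hnn : ∀ i j x, i ≠ j → 0 ≤ q i j x)
    (hdiag : ∀ i x, |q i i x| ≤ K₀)
    (hub : ∀ i j x, q i j x ≤ K₀)
    (hrange : ∀ i j x, (i + c i < j ∨ j + c j < i) → q i j x = 0)
    (hrangebar : ∀ i j, (i + cbar i < j ∨ j + cbar j < i) → qbar i j = 0)
    (hbar_lt : ∀ j k, j < k →
      qbar k j = sInf {r : ℝ | ∃ l x, j < l ∧ l ≤ k ∧ r = q l j x})
    (hbar_gt : ∀ j k, k < j →
      qbar k j = sSup {r : ℝ | ∃ l x, 1 ≤ l ∧ l ≤ k ∧ r = q l j x})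
    (i k : ℕ) (hi : 1 ≤ i) (hik : i < k) (hkN : k ≤ N)
    (m : ℕ) (hm : m < i) (x : Fin d → ℝ) :
    (⋃ r ∈ {r : ℕ | r ≤ m}, Gam d (fun a b _ => qbar a b) cbar k r x) ⊆
      ⋃ r ∈ {r : ℕ | r ≤ m}, Gam d q c i r x := by
  classical
  set S : ℕ → ℝ := fun r => ∑ l ∈ Finset.Ico 1 r, q i l x with hSdef
  set Sb : ℕ → ℝ := fun r => ∑ l ∈ Finset.Ico 1 r, qbar k l with hSbdef
  have key : ∀ l, 1 ≤ l → l ≤ m → 0 ≤ qbar k l ∧ qbar k l ≤ q i l x := by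
    intro l h1 h2
    have hlk : l < k := by omega
    rw [hbar_lt l k hlk]
    have hmem : q i l x ∈ {r : ℝ | ∃ l' x', l < l' ∧ l' ≤ k ∧ r = q l' l x'} :=
      ⟨i, x, by omega, hik.le, rfl⟩
    have hbdd : BddBelow {r : ℝ | ∃ l' x', l < l' ∧ l' ≤ k ∧ r = q l' l x'} := by
      refine ⟨0, ?_⟩
      rintro r ⟨l', x', h1', h2', rfl⟩
      exact hnn _ _ _ (by omega)
    refine ⟨le_csInf ⟨_, hmem⟩ ?_, csInf_le hbdd hmem⟩
    rintro r ⟨l', x', h1', h2', rfl⟩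
    exact hnn _ _ _ (by omega)
  have hSmono : ∀ r ≤ m, S r ≤ S (r+1) := by
    intro r hr
    rcases Nat.eq_zero_or_pos r with h0 | h1
    · subst h0; simp [hSdef]
    · have : S (r+1) = S r + q i r x := Finset.sum_Ico_succ_top h1 _
      rw [this]
      have : 0 ≤ q i r x := hnn _ _ _ (by omega)
      linarith
  have hSbmono : ∀ r ≤ m, Sb r ≤ Sb (r+1) := by
    intro r hr
    rcases Nat.eq_zero_or_pos r with h0 | h1
    · subst h0; simp [hSbdef]
    · have : Sb (r+1) = Sb r + qbar k r := Finset.sum_Ico_succ_top h1 _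
      rw [this]
      have := (key r h1 hr).1
      linarith
  have hGb : ∀ r ∈ {r : ℕ | r ≤ m}, Gam d (fun a b _ => qbar a b) cbar k r x
      = Ico (Sb r) (Sb (r+1)) := by
    intro r hr
    have : r < k := by simp only [Set.mem_setOf_eq] at hr; omega
    simp [Gam, this, hSbdef]
  have hG : ∀ r ∈ {r : ℕ | r ≤ m}, Gam d q c i r x = Ico (S r) (S (r+1)) := by
    intro r hr
    have : r < i := by simp only [Set.mem_setOf_eq] at hr; omega
    simp [Gam, this, hSdef]
  have e1 : (⋃ r ∈ {r : ℕ | r ≤ m}, Gam d (fun a b _ => qbar a b) cbar k r x)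
      = Ico (Sb 0) (Sb (m+1)) := by
    rw [Set.iUnion₂_congr hGb, biUnion_Ico_eq Sb m hSbmono]
  have e2 : (⋃ r ∈ {r : ℕ | r ≤ m}, Gam d q c i r x) = Ico (S 0) (S (m+1)) := by
    rw [Set.iUnion₂_congr hG, biUnion_Ico_eq S m hSmono]
  rw [e1, e2]
  apply Set.Ico_subset_Ico
  · simp [hSdef, hSbdef]
  · apply Finset.sum_le_sum
    intro l hl
    simp only [Finset.mem_Ico] at hl
    exact (key l hl.1 (by omega)).2
end

section
/- Suppose $\pi$ and $\tilde\pi$ are probability measures on a countable set $\S$, $P_s h(i_0)$ and $\tilde P_s h(i_0)$ are real-valued functions of $s \ge 0$ such that for every function $h: \S \to \mathbb{R}$ with $\sup_i |h_i| \le 1$ and every $s \ge 0$: $|P_s h(i_0) - \pi(h)| \le \eta_s$, $|\tilde P_s h(i_0) - \tilde\pi(h)| \le \eta_s$, and $\frac{1}{t}\bigl|\int_0^t (P_s h(i_0) - \tilde P_s h(i_0))\,ds\bigr| \le Dt$ for all $t>0$, where $\eta: [0,\infty) \to [0,2]$ with $E := \int_0^\infty \eta_s ds < \infty$ and $D > 0$.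 Then $\|\pi - \tilde\pi\|_{var} := \sup_{\sup|h| \le 1}|\pi(h) - \tilde\pi(h)| \le 2\sqrt{2}\,\sqrt{E}\,\sqrt{D}$. -/
open MeasureTheory

lemma aux_opt {E D X : ℝ} (hE : 0 ≤ E) (hD : 0 < D)
    (h : ∀ t : ℝ, 0 < t → X ≤ 2 * E / t + D * t) :
    X ≤ 2 * Real.sqrt 2 * Real.sqrt E * Real.sqrt D := by
  rcases eq_or_lt_of_le hE with hE0 | hE0
  · have hX : X ≤ 0 := by
      by_contra hX
      push_neg at hX
      have ht : (0:ℝ) < X / (2 * D) := by positivity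
      have h1 := h _ ht
      rw [← hE0] at h1
      have h2 : D * (X / (2 * D)) = X / 2 := by field_simp
      simp [h2] at h1
      linarith
    rw [← hE0]
    simpa using hX
  · set t := Real.sqrt 2 * Real.sqrt E / Real.sqrt D with ht
    have hsE : Real.sqrt E > 0 := Real.sqrt_pos.mpr hE0
    have hsD : Real.sqrt D > 0 := Real.sqrt_pos.mpr hD
    have hs2 : Real.sqrt 2 > 0 := by positivity
    have htpos : 0 < t := by positivity
    have hE' : Real.sqrt E ^ 2 = E := Real.sq_sqrt hE
    have hD' : Real.sqrt D ^ 2 = D := Real.sq_sqrt hD.le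
    have h2' : Real.sqrt 2 ^ 2 = 2 := Real.sq_sqrt (by norm_num)
    have h2E : Real.sqrt 2 ^ 2 * Real.sqrt E ^ 2 = 2 * E := by rw [h2', hE']
    have h2ED : Real.sqrt 2 ^ 2 * Real.sqrt E ^ 2 * Real.sqrt D ^ 2 = 2 * E * D := by
      rw [h2', hE', hD']
    have key : 2 * E / t + D * t = 2 * Real.sqrt 2 * Real.sqrt E * Real.sqrt D := by
      rw [ht]; field_simp; nlinarith [hE', hD', h2', h2E, h2ED]
    calc X ≤ 2 * E / t + D * t := h t htpos
    _ = _ := key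

/-- Corollary 3.3: perturbation bound for invariant measures.
`π(h) = ∑' i, π i * h i`; the hypotheses encode `|P_s h(i₀) - π(h)| ≤ η_s`,
`|P̃_s h(i₀) - π̃(h)| ≤ η_s` and `(1/t)|∫_0^t (P_s h - P̃_s h) ds| ≤ D t`, and the
conclusion is `‖π - π̃‖_var ≤ 2√2 √(∫_0^∞ η) √D`. -/
theorem stmt_7 {S : Type*} [Countable S] (i0 : S) (π πt : S → ℝ)
    (hπ0 : ∀ i, 0 ≤ π i) (hπt0 : ∀ i, 0 ≤ πt i)
    (hπs : Summable π) (hπts : Summable πt)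
    (hπ1 : ∑' i, π i = 1) (hπt1 : ∑' i, πt i = 1)
    (P Pt : (S → ℝ) → ℝ → ℝ) (η : ℝ → ℝ) (D : ℝ) (hD : 0 < D)
    (hη : ∀ s, 0 ≤ η s ∧ η s ≤ 2)
    (hηint : IntegrableOn η (Set.Ici 0))
    (hPint : ∀ (h : S → ℝ) (t : ℝ), 0 < t → IntegrableOn (P h) (Set.Ioc 0 t))
    (hPtint : ∀ (h : S → ℝ) (t : ℝ), 0 < t → IntegrableOn (Pt h) (Set.Ioc 0 t))
    (hP : ∀ h : S → ℝ, (∀ i, |h i| ≤ 1) → ∀ s, 0 ≤ s →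
      |P h s - ∑' i, π i * h i| ≤ η s)
    (hPt : ∀ h : S → ℝ, (∀ i, |h i| ≤ 1) → ∀ s, 0 ≤ s →
      |Pt h s - ∑' i, πt i * h i| ≤ η s)
    (hdiff : ∀ h : S → ℝ, (∀ i, |h i| ≤ 1) → ∀ t : ℝ, 0 < t →
      (1 / t) * |∫ s in Set.Ioc (0 : ℝ) t, (P h s - Pt h s)| ≤ D * t) :
    ∀ h : S → ℝ, (∀ i, |h i| ≤ 1) →
      |(∑' i, π i * h i) - ∑' i, πt i * h i| ≤
        2 * Real.sqrt 2 * Real.sqrt (∫ s in Set.Ici (0 : ℝ), η s) * Real.sqrt D := by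
  intro h hh
  set A := ∑' i, π i * h i with hA
  set B := ∑' i, πt i * h i with hB
  set E := ∫ s in Set.Ici (0 : ℝ), η s with hE
  have hE0 : 0 ≤ E := setIntegral_nonneg measurableSet_Ici (fun s _ => (hη s).1)
  apply aux_opt hE0 hD
  intro t htpos
  -- integrability pieces
  have hP1 : IntegrableOn (fun s => A - P h s) (Set.Ioc 0 t) :=
    ((integrableOn_const_iff (C := A) (by simp)).mpr (Or.inr (by simp [htpos]))).sub (hPint h t htpos)
  have hP3 : IntegrableOn (fun s => Pt h s - B) (Set.Ioc 0 t) :=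
    (hPtint h t htpos).sub ((integrableOn_const_iff (C := B) (by simp)).mpr (Or.inr (by simp [htpos])))
  have hP2 : IntegrableOn (fun s => P h s - Pt h s) (Set.Ioc 0 t) :=
    (hPint h t htpos).sub (hPtint h t htpos)
  have hηIoc : IntegrableOn η (Set.Ioc 0 t) :=
    hηint.mono_set (fun x hx => le_of_lt hx.1)
  -- the constant integral
  have hconst : ∫ s in Set.Ioc (0:ℝ) t, (A - B) = t * (A - B) := by
    rw [setIntegral_const]
    simp [Real.volume_Ioc, ENNReal.toReal_ofReal htpos.le, htpos.le]
  have hsplit : ∫ s in Set.Ioc (0:ℝ) t, (A - B) =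
      (∫ s in Set.Ioc (0:ℝ) t, (A - P h s)) +
      (∫ s in Set.Ioc (0:ℝ) t, (P h s - Pt h s)) +
      (∫ s in Set.Ioc (0:ℝ) t, (Pt h s - B)) := by
    have e1 : (∫ s in Set.Ioc (0:ℝ) t, (A - B)) =
        ∫ s in Set.Ioc (0:ℝ) t, ((A - P h s) + (P h s - Pt h s) + (Pt h s - B)) := by
      congr 1; funext s; ring
    have hP12 : IntegrableOn (fun s => (A - P h s) + (P h s - Pt h s)) (Set.Ioc 0 t) :=
      hP1.add hP2
    rw [e1, integral_add hP12 hP3, integral_add hP1 hP2]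
  -- bound the three pieces
  have bnd1 : |∫ s in Set.Ioc (0:ℝ) t, (A - P h s)| ≤ E := by
    calc |∫ s in Set.Ioc (0:ℝ) t, (A - P h s)|
        ≤ ∫ s in Set.Ioc (0:ℝ) t, |A - P h s| := by
          simpa using norm_integral_le_integral_norm (μ := volume.restrict (Set.Ioc 0 t))
            (fun s => A - P h s)
      _ ≤ ∫ s in Set.Ioc (0:ℝ) t, η s := by
          apply setIntegral_mono_on hP1.abs hηIoc measurableSet_Ioc
          intro s hs
          rw [abs_sub_comm]
          exact hP h hh s hs.1.le
      _ ≤ E := setIntegral_mono_set hηint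
          (Filter.Eventually.of_forall (fun s => (hη s).1))
          (HasSubset.Subset.eventuallyLE (fun x hx => le_of_lt hx.1))
  have bnd3 : |∫ s in Set.Ioc (0:ℝ) t, (Pt h s - B)| ≤ E := by
    calc |∫ s in Set.Ioc (0:ℝ) t, (Pt h s - B)|
        ≤ ∫ s in Set.Ioc (0:ℝ) t, |Pt h s - B| := by
          simpa using norm_integral_le_integral_norm (μ := volume.restrict (Set.Ioc 0 t))
            (fun s => Pt h s - B)
      _ ≤ ∫ s in Set.Ioc (0:ℝ) t, η s := by
          apply setIntegral_mono_on hP3.abs hηIoc measurableSet_Ioc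
          intro s hs
          exact hPt h hh s hs.1.le
      _ ≤ E := setIntegral_mono_set hηint
          (Filter.Eventually.of_forall (fun s => (hη s).1))
          (HasSubset.Subset.eventuallyLE (fun x hx => le_of_lt hx.1))
  have bnd2 : |∫ s in Set.Ioc (0:ℝ) t, (P h s - Pt h s)| ≤ D * t * t := by
    have := hdiff h hh t htpos
    rw [div_mul_eq_mul_div, one_mul, div_le_iff₀ htpos] at this
    linarith [this]
  -- combine
  have hmain : t * |A - B| ≤ 2 * E + D * t * t := by
    have : |∫ s in Set.Ioc (0:ℝ) t, (A - B)| ≤ 2 * E + D * t * t := by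
      rw [hsplit]
      calc |_ + _ + _| ≤ |(∫ s in Set.Ioc (0:ℝ) t, (A - P h s)) +
            (∫ s in Set.Ioc (0:ℝ) t, (P h s - Pt h s))| +
            |∫ s in Set.Ioc (0:ℝ) t, (Pt h s - B)| := abs_add_le _ _
        _ ≤ |∫ s in Set.Ioc (0:ℝ) t, (A - P h s)| +
            |∫ s in Set.Ioc (0:ℝ) t, (P h s - Pt h s)| +
            |∫ s in Set.Ioc (0:ℝ) t, (Pt h s - B)| := by
              gcongr; exact abs_add_le _ _
        _ ≤ E + D * t * t + E := by gcongr
        _ = 2 * E + D * t * t := by ring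
    rwa [hconst, abs_mul, abs_of_pos htpos] at this
  rw [div_add' _ _ _ htpos.ne', le_div_iff₀ htpos]
  nlinarith [hmain]
end
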